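/- arXiv:2012.11736 — 2 statements merged into one kernel-verified Lean document; each statement's English description precedes it below -/
import Mathlib

section
/- Let f(t,z) = ln(1 + 1/t)/z. For all positive reals t, z, t⁰, z⁰, the tangent-plane lower bound holds: f(t,z) ≥ 2·f(t⁰,z⁰) + 1/(z⁰(t⁰+1)) − t/(z⁰·t⁰·(t⁰+1)) − (f(t⁰,z⁰)/z⁰)·z, with equality when (t,z) = (t⁰,z⁰). -/
open Real Set

lemma gDeriv {t : ℝ} (ht : 0 < t) :
    HasDerivAt (fun x : ℝ => Real.log (1 + 1 / x)) (-(1 / (t * (t + 1)))) t := by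
  have h1 : (0:ℝ) < 1 + 1 / t := by positivity
  have hinv : HasDerivAt (fun x : ℝ => 1 + 1 / x) (-(1 / t ^ 2)) t := by
    simpa using ((hasDerivAt_inv ht.ne').const_add 1)
  have := (Real.hasDerivAt_log h1.ne').comp t hinv
  refine this.congr_deriv ?_
  field_simp

lemma gPos {t : ℝ} (ht : 0 < t) : 0 < Real.log (1 + 1 / t) :=
  Real.log_pos (by simp [lt_add_iff_pos_right]; positivity)

lemma gGe {t : ℝ} (ht : 0 < t) : 1 / (t + 1) ≤ Real.log (1 + 1 / t) := by
  have h := Real.log_le_sub_one_of_pos (x := t / (t + 1)) (by positivity)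
  have he : Real.log (t / (t + 1)) = - Real.log (1 + 1 / t) := by
    rw [← Real.log_inv]; congr 1; field_simp
  rw [he] at h
  have h2 : t / (t+1) - 1 = -(1/(t+1)) := by field_simp; ring
  rw [h2] at h; linarith

noncomputable def phi (x : ℝ) : ℝ := (x^2 + x)^2 * Real.log (1 + 1 / x)

lemma phiDeriv {t : ℝ} (ht : 0 < t) :
    HasDerivAt phi ((2*(t^2+t)*(2*t+1)) * Real.log (1 + 1/t) - (t^2+t)) t := by
  have h1 : HasDerivAt (fun x : ℝ => (x^2+x)^2) (2*(t^2+t)*(2*t+1)) t := by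
    have : HasDerivAt (fun x : ℝ => x^2 + x) (2*t + 1) t := by
      simpa using ((hasDerivAt_pow 2 t).fun_add (hasDerivAt_id' t))
    simpa [Function.comp_def, mul_comm, mul_assoc, mul_left_comm] using
      ((hasDerivAt_pow 2 _).comp t this)
  have h2 := gDeriv ht
  have := h1.mul h2
  refine this.congr_deriv ?_
  have h3 : t * (t+1) ≠ 0 := by positivity
  field_simp
  ring

lemma phiMono : StrictMonoOn phi (Ioi (0:ℝ)) := by
  apply strictMonoOn_of_deriv_pos (convex_Ioi 0)
  · intro x hx
    exact (phiDeriv hx).continuousAt.continuousWithinAt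
  · intro x hx
    rw [interior_Ioi] at hx
    have hx' : (0:ℝ) < x := hx
    rw [(phiDeriv hx').deriv]
    have hg := gGe hx'
    have h1 : (0:ℝ) < x^2 + x := by positivity
    have h4 : 2*(x^2+x)*(2*x+1)*(1/(x+1)) = 2*x*(2*x+1) := by
      field_simp
    have h5 : 2*(x^2+x)*(2*x+1)*(1/(x+1)) ≤ 2*(x^2+x)*(2*x+1)*Real.log (1+1/x) := by
      apply mul_le_mul_of_nonneg_left hg
      positivity
    rw [h4] at h5
    nlinarith

noncomputable def hh (x : ℝ) : ℝ := Real.sqrt (Real.log (1 + 1 / x))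

noncomputable def DD (x : ℝ) : ℝ := -(1 / (2 * Real.sqrt (phi x)))

lemma phiPos {x : ℝ} (hx : 0 < x) : 0 < phi x := by
  unfold phi
  have := gPos hx
  positivity

lemma hhDeriv {t : ℝ} (ht : 0 < t) : HasDerivAt hh (DD t) t := by
  have hG := gPos ht
  have := (Real.hasDerivAt_sqrt hG.ne').comp t (gDeriv ht)
  refine this.congr_deriv ?_
  unfold DD phi
  rw [Real.sqrt_mul (by positivity) , Real.sqrt_sq (by positivity)]
  have hsg : 0 < Real.sqrt (Real.log (1 + 1/t)) := Real.sqrt_pos.mpr hG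
  field_simp

lemma DDmono {a b : ℝ} (ha : 0 < a) (hab : a ≤ b) : DD a ≤ DD b := by
  have hb : 0 < b := lt_of_lt_of_le ha hab
  have h1 : phi a ≤ phi b := by
    rcases eq_or_lt_of_le hab with h | h
    · rw [h]
    · exact (phiMono ha hb h).le
  have h2 : 0 < Real.sqrt (phi a) := Real.sqrt_pos.mpr (phiPos ha)
  have h3 : Real.sqrt (phi a) ≤ Real.sqrt (phi b) := Real.sqrt_le_sqrt h1
  unfold DD
  have : 1 / (2 * Real.sqrt (phi b)) ≤ 1 / (2 * Real.sqrt (phi a)) := by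
    apply one_div_le_one_div_of_le (by positivity)
    linarith
  linarith

lemma tangent {t t0 : ℝ} (ht : 0 < t) (ht0 : 0 < t0) :
    hh t0 + DD t0 * (t - t0) ≤ hh t := by
  rcases lt_trichotomy t t0 with h | h | h
  · obtain ⟨c, hc, hceq⟩ := exists_hasDerivAt_eq_slope hh DD h
      (fun x hx => ((hhDeriv (lt_of_lt_of_le ht hx.1)).continuousAt).continuousWithinAt)
      (fun x hx => hhDeriv (lt_of_lt_of_le ht hx.1.le))
    have hDc : DD c ≤ DD t0 := DDmono (lt_of_lt_of_le ht hc.1.le) hc.2.le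
    have hpos : 0 < t0 - t := by linarith
    rw [hceq] at hDc
    rw [div_le_iff₀ hpos] at hDc
    nlinarith
  · subst h; simp
  · obtain ⟨c, hc, hceq⟩ := exists_hasDerivAt_eq_slope hh DD h
      (fun x hx => ((hhDeriv (lt_of_lt_of_le ht0 hx.1)).continuousAt).continuousWithinAt)
      (fun x hx => hhDeriv (lt_of_lt_of_le ht0 hx.1.le))
    have hDc : DD t0 ≤ DD c := DDmono ht0 hc.1.le
    have hpos : 0 < t - t0 := by linarith
    rw [hceq] at hDc
    rw [le_div_iff₀ hpos] at hDc
    nlinarith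

lemma keyIneq {t t0 : ℝ} (ht : 0 < t) (ht0 : 0 < t0) :
    Real.log (1 + 1/t0) + (t0 - t) / (2 * (t0^2 + t0)) ≤
      Real.sqrt (Real.log (1 + 1/t)) * Real.sqrt (Real.log (1 + 1/t0)) := by
  have hL := gPos ht0
  set S := Real.sqrt (Real.log (1 + 1/t0)) with hSdef
  set T := Real.sqrt (Real.log (1 + 1/t)) with hTdef
  have hsl : 0 < S := Real.sqrt_pos.mpr hL
  have htan := tangent ht ht0
  have hmul := mul_le_mul_of_nonneg_left htan hsl.le
  have hD : S * DD t0 = -(1 / (2 * (t0^2 + t0))) := by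
    unfold DD phi
    rw [Real.sqrt_mul (by positivity), Real.sqrt_sq (by positivity)]
    rw [← hSdef]
    have h0 : (0:ℝ) < t0^2 + t0 := by positivity
    field_simp
  have hsq : S * S = Real.log (1 + 1/t0) := Real.mul_self_sqrt hL.le
  have hhh0 : hh t0 = S := rfl
  have hhht : hh t = T := rfl
  rw [hhh0, hhht, mul_add] at hmul
  have h2 : S * (DD t0 * (t - t0)) = (S * DD t0) * (t - t0) := by ring
  rw [h2, hD] at hmul
  have h3 : -(1 / (2*(t0^2+t0))) * (t - t0) = (t0 - t) / (2 * (t0^2 + t0)) := by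
    have h0 : (0:ℝ) < t0^2 + t0 := by positivity
    field_simp
    ring
  rw [h3, hsq] at hmul
  linarith [mul_comm S T]


/-- Tangent-plane lower bound for `f(t,z) = ln(1 + 1/t)/z` at a positive reference
point `(t⁰, z⁰)`, with equality at the reference point. -/
theorem stmt_1 (t z t0 z0 : ℝ) (ht : 0 < t) (hz : 0 < z) (ht0 : 0 < t0) (hz0 : 0 < z0) :
    Real.log (1 + 1 / t) / z ≥
      2 * (Real.log (1 + 1 / t0) / z0) + 1 / (z0 * (t0 + 1))
        - t / (z0 * t0 * (t0 + 1)) - (Real.log (1 + 1 / t0) / z0 / z0) * z ∧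
    (t = t0 → z = z0 →
      Real.log (1 + 1 / t) / z =
        2 * (Real.log (1 + 1 / t0) / z0) + 1 / (z0 * (t0 + 1))
          - t / (z0 * t0 * (t0 + 1)) - (Real.log (1 + 1 / t0) / z0 / z0) * z) := by
  constructor
  · set L := Real.log (1 + 1 / t0) with hLdef
    set G := Real.log (1 + 1 / t) with hGdef
    have hL : 0 < L := gPos ht0
    have hG : 0 < G := gPos ht
    set sg := Real.sqrt G with hsgdef
    set sl := Real.sqrt L with hsldef
    set sz := Real.sqrt z with hszdef
    have hsg2 : sg^2 = G := Real.sq_sqrt hG.le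
    have hsl2 : sl^2 = L := Real.sq_sqrt hL.le
    have hsz2 : sz^2 = z := Real.sq_sqrt hz.le
    have hszp : 0 < sz := Real.sqrt_pos.mpr hz
    have key1 : L + (t0 - t) / (2 * (t0^2 + t0)) ≤ sg * sl := keyIneq ht ht0
    have key2 : 2 * (sg * sl) / z0 ≤ G / z + (L / z0 / z0) * z := by
      rw [← sub_nonneg]
      have heq : G / z + (L / z0 / z0) * z - 2 * (sg * sl) / z0
          = (sg * z0 - sl * sz^2)^2 / (sz^2 * z0^2) := by
        rw [← hsg2, ← hsl2, ← hsz2]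
        field_simp
        ring
      rw [heq]
      positivity
    have h0 : (0:ℝ) < t0^2 + t0 := by positivity
    have heq2 : (t0 - t) / (t0^2 + t0) = 2 * ((t0 - t) / (2 * (t0^2 + t0))) := by
      field_simp
    have key1' : 2 * L + (t0 - t) / (t0^2 + t0) ≤ 2 * (sg * sl) := by linarith
    have h6 : (2 * L + (t0 - t) / (t0^2 + t0)) / z0 ≤ 2 * (sg * sl) / z0 :=
      (div_le_div_iff_of_pos_right hz0).mpr key1'
    have h7 : (2 * L + (t0 - t) / (t0^2 + t0)) / z0
        = 2 * (L / z0) + 1 / (z0 * (t0 + 1)) - t / (z0 * t0 * (t0 + 1)) := by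
      field_simp
      ring
    rw [h7] at h6
    linarith
  · intro h1 h2
    rw [h1, h2]
    set L := Real.log (1 + 1 / t0) with hLdef
    field_simp
    ring
end

section
/- For all positive reals x, y, z and all positive reals x⁰, y⁰, z⁰, one has (1/z)·ln(1 + x²/y) ≥ 𝒜 − ℬ·(y/x²) − 𝒞·z, where 𝒜 = 2·ln(1 + (x⁰)²/y⁰)/z⁰ + ((x⁰)²/y⁰)/(z⁰·(1 + (x⁰)²/y⁰)), ℬ = ((x⁰)²/y⁰)²/(z⁰·(1 + (x⁰)²/y⁰)), and 𝒞 = ln(1 + (x⁰)²/y⁰)/(z⁰)². Moreover, equality holds at (x,y,z) = (x⁰,y⁰,z⁰). -/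
set_option maxHeartbeats 800000

/-- Monotonicity helper: if `F` has nonneg derivative on `[0, ∞)` then `F 0 ≤ F u`. -/
lemma mono_aux (F f' : ℝ → ℝ) (h : ∀ w : ℝ, 0 ≤ w → HasDerivAt F (f' w) w)
    (h0 : ∀ w : ℝ, 0 < w → 0 ≤ f' w) {u : ℝ} (hu : 0 ≤ u) : F 0 ≤ F u := by
  have hmono : MonotoneOn F (Set.Ici (0:ℝ)) := by
    apply monotoneOn_of_hasDerivWithinAt_nonneg (f' := f') (convex_Ici 0)
    · exact fun w hw => (h w hw).continuousAt.continuousWithinAt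
    · intro w hw
      rw [interior_Ici] at hw
      exact (h w (le_of_lt hw)).hasDerivWithinAt
    · intro w hw
      rw [interior_Ici] at hw
      exact h0 w hw
  exact hmono Set.self_mem_Ici hu hu

lemma hasDerivAt_log_one_add {v : ℝ} (hv : 0 ≤ v) :
    HasDerivAt (fun w : ℝ => Real.log (1 + w)) (1/(1+v)) v := by
  have h : HasDerivAt (fun w : ℝ => 1 + w) 1 v := by
    simpa using (hasDerivAt_id v).const_add 1
  have := (Real.hasDerivAt_log (by linarith : (1:ℝ)+v ≠ 0)).comp v h
  simp only [mul_one] at this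
  rw [one_div]
  exact this

/-- Padé lower bound for the logarithm. -/
lemma pade_lower (u : ℝ) (hu : 0 ≤ u) : 2*u/(2+u) ≤ Real.log (1+u) := by
  have key := mono_aux (fun w => Real.log (1+w) - 2*w/(2+w))
      (fun w => 1/(1+w) - 4/(2+w)^2) ?_ ?_ hu
  · simpa using key
  · intro w hw
    have h1 := hasDerivAt_log_one_add hw
    have h2 : HasDerivAt (fun w : ℝ => 2*w/(2+w)) (4/(2+w)^2) w := by
      have ha : HasDerivAt (fun w : ℝ => 2*w) 2 w := by
        simpa using (hasDerivAt_id w).const_mul 2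
      have hb : HasDerivAt (fun w : ℝ => 2+w) 1 w := by
        simpa using (hasDerivAt_id w).const_add 2
      have hne : (2:ℝ)+w ≠ 0 := by linarith
      have := ha.div hb hne
      refine this.congr_deriv ?_
      ring
    exact h1.sub h2
  · intro w hw
    have h1 : (0:ℝ) < 1+w := by linarith
    have h2 : (0:ℝ) < (2+w)^2 := by positivity
    rw [sub_nonneg, div_le_div_iff₀ h2 h1]
    nlinarith [sq_nonneg w]

/-- Padé upper bound for the logarithm. -/
lemma pade_upper (u : ℝ) (hu : 0 ≤ u) : Real.log (1+u) ≤ u*(6+u)/(6+4*u) := by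
  have key := mono_aux (fun w => w*(6+w)/(6+4*w) - Real.log (1+w))
      (fun w => ((6+2*w)*(6+4*w) - (w*(6+w))*4)/(6+4*w)^2 - 1/(1+w)) ?_ ?_ hu
  · simpa using key
  · intro w hw
    have h1 := hasDerivAt_log_one_add hw
    have h2 : HasDerivAt (fun w : ℝ => w*(6+w)/(6+4*w))
        (((6+2*w)*(6+4*w) - (w*(6+w))*4)/(6+4*w)^2) w := by
      have ha : HasDerivAt (fun w : ℝ => w*(6+w)) (6+2*w) w := by
        have := (hasDerivAt_id w).mul ((hasDerivAt_id w).const_add 6)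
        refine this.congr_deriv ?_
        simp only [id_eq]
        ring
      have hb : HasDerivAt (fun w : ℝ => 6+4*w) 4 w := by
        simpa using ((hasDerivAt_id w).const_mul 4).const_add 6
      have hne : (6:ℝ)+4*w ≠ 0 := by linarith
      exact ha.div hb hne
    exact h2.sub h1
  · intro w hw
    have h1 : (0:ℝ) < 1+w := by linarith
    have h2 : (0:ℝ) < (6+4*w)^2 := by positivity
    rw [sub_nonneg, div_le_div_iff₀ h1 h2]
    nlinarith [sq_nonneg w, mul_nonneg (mul_nonneg hw.le hw.le) hw.le]

/-- The core two–variable surrogate inequality. -/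
lemma core_ineq (t t0 z z0 : ℝ) (ht : 0 < t) (ht0 : 0 < t0) (hz : 0 < z) (hz0 : 0 < z0) :
    2 * Real.log (1 + t0) / z0 + t0 / (z0 * (1 + t0))
      - t0 ^ 2 / (z0 * (1 + t0)) * (1 / t) - Real.log (1 + t0) / z0 ^ 2 * z
      ≤ (1 / z) * Real.log (1 + t) := by
  obtain ⟨L, hL⟩ : ∃ L, L = Real.log (1 + t) := ⟨_, rfl⟩
  obtain ⟨L0, hL0⟩ : ∃ L0, L0 = Real.log (1 + t0) := ⟨_, rfl⟩
  rw [← hL, ← hL0]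
  have h1t : (0:ℝ) < 1 + t := by linarith
  have h1t0 : (0:ℝ) < 1 + t0 := by linarith
  have hL0pos : 0 < L0 := hL0 ▸ Real.log_pos (by linarith)
  have hLnn : 0 ≤ L := hL ▸ Real.log_nonneg (by linarith)
  obtain ⟨e, he⟩ : ∃ e, e = t0*(t-t0)/((1+t0)*t) := ⟨_, rfl⟩
  -- main quadratic nonnegativity
  have hq : 0 ≤ L0*((z-z0)/z0)^2 - e*((z-z0)/z0) + (L - L0 - e) := by
    rcases le_or_gt (e + 2*L0) 0 with hcA | hcB
    · have hw : 0 < (z-z0)/z0 + 1 := by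
        have hid : (z-z0)/z0 + 1 = z/z0 := by field_simp; ring
        rw [hid]; positivity
      nlinarith [mul_nonneg hL0pos.le (sq_nonneg ((z-z0)/z0+1)),
        mul_nonneg (neg_nonneg.2 hcA) hw.le, hLnn]
    · -- key: 4 L0 (L - L0 - e) ≥ e²
      have hD : e^2 ≤ 4*L0*(L - L0 - e) := by
        have hlb0 : 2*t0/(2+t0) ≤ L0 := hL0 ▸ pade_lower t0 ht0.le
        rcases le_or_gt t0 t with h1 | h1
        · -- case t ≥ t0
          have hv0 : 0 ≤ (t-t0)/(1+t0) := div_nonneg (by linarith) (by linarith)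
          have hlog : L - L0 = Real.log (1 + (t-t0)/(1+t0)) := by
            rw [hL, hL0, show (1:ℝ) + (t-t0)/(1+t0) = (1+t)/(1+t0) by field_simp; ring,
              Real.log_div (by linarith) (by linarith)]
          have hlb := pade_lower _ hv0
          obtain ⟨X, hX⟩ : ∃ X, X = (t-t0)^2*(2+t0)/((2+t0+t)*(1+t0)*t) := ⟨_, rfl⟩
          have hden : (0:ℝ) < 2+t0+t := by linarith
          have hstep : 2*((t-t0)/(1+t0))/(2+(t-t0)/(1+t0)) - e = X := by
            rw [hX, he, show (2:ℝ)+(t-t0)/(1+t0) = (2+t0+t)/(1+t0) by field_simp; ring,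
              div_div_eq_mul_div]
            field_simp
            ring
          have hDlb : X ≤ L - L0 - e := by
            rw [hlog]; linarith
          have hXnn : 0 ≤ X := by rw [hX]; positivity
          have h8 : 0 ≤ 8*(1+t0)*t - t0*(2+t0+t) := by nlinarith
          have hfin : e^2 ≤ 4*(2*t0/(2+t0))*X := by
            have hid : 4*(2*t0/(2+t0))*X - e^2
                = t0*(t-t0)^2*(8*(1+t0)*t - t0*(2+t0+t))/((2+t0+t)*(1+t0)^2*t^2) := by
              rw [hX, he]
              have h2' : (0:ℝ) < 2+t0 := by linarith
              field_simp
              ring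
            nlinarith [div_nonneg (mul_nonneg (mul_nonneg ht0.le (sq_nonneg (t-t0))) h8)
              (by positivity : (0:ℝ) ≤ (2+t0+t)*(1+t0)^2*t^2), hid]
          have s1 : 4*(2*t0/(2+t0))*X ≤ 4*L0*X := by
            nlinarith [mul_le_mul_of_nonneg_right hlb0 hXnn]
          have s2 : 4*L0*X ≤ 4*L0*(L-L0-e) := by
            nlinarith [mul_le_mul_of_nonneg_left hDlb (by positivity : (0:ℝ) ≤ 4*L0)]
          linarith
        · -- case t < t0
          have hu0 : 0 ≤ (t0-t)/(1+t) := div_nonneg (by linarith) (by linarith)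
          have hlog : L0 - L = Real.log (1 + (t0-t)/(1+t)) := by
            rw [hL, hL0, show (1:ℝ) + (t0-t)/(1+t) = (1+t0)/(1+t) by field_simp; ring,
              Real.log_div (by linarith) (by linarith)]
          have hub := pade_upper _ hu0
          obtain ⟨Q, hQ⟩ : ∃ Q,
              Q = (t0-t)^2*(6+4*t0+5*t+3*t*t0)/((1+t0)*t*(1+t)*(6+2*t+4*t0)) := ⟨_, rfl⟩
          have hden : (0:ℝ) < 6+2*t+4*t0 := by linarith
          have hstep : -e - ((t0-t)/(1+t))*(6+(t0-t)/(1+t))/(6+4*((t0-t)/(1+t))) = Q := by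
            rw [hQ, he, show (6:ℝ)+4*((t0-t)/(1+t)) = (6+2*t+4*t0)/(1+t) by field_simp; ring,
              show (6:ℝ)+(t0-t)/(1+t) = (6+5*t+t0)/(1+t) by field_simp; ring]
            field_simp
            ring
          have hDQ : Q ≤ L - L0 - e := by
            have hub' : L0 - L ≤ ((t0-t)/(1+t))*(6+(t0-t)/(1+t))/(6+4*((t0-t)/(1+t))) := by
              rw [hlog]; exact hub
            linarith
          have hQnn : 0 ≤ Q := by rw [hQ]; positivity
          have s2 : 4*L0*Q ≤ 4*L0*(L-L0-e) := by
            nlinarith [mul_le_mul_of_nonneg_left hDQ (by positivity : (0:ℝ) ≤ 4*L0)]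
          rcases le_or_gt ((t0-t)*(2+t0)) (4*(1+t0)*t) with h2 | h2
          · -- subcase (i)
            have hpoly : 0 ≤ 8*(1+t0)*t*(6+4*t0+5*t+3*t*t0)
                - t0*(2+t0)*(1+t)*(6+2*t+4*t0) := by
              nlinarith [mul_nonneg (sub_nonneg.2 h2) ht.le,
                mul_nonneg (sub_nonneg.2 h2) ht0.le,
                mul_nonneg (mul_nonneg (sub_nonneg.2 h2) ht.le) ht0.le,
                mul_pos ht ht0, sq_nonneg (t0-t), mul_nonneg ht.le ht0.le]
            have hfin : e^2 ≤ 4*(2*t0/(2+t0))*Q := by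
              have hid : 4*(2*t0/(2+t0))*Q - e^2
                  = (t0-t)^2*(8*(1+t0)*t*(6+4*t0+5*t+3*t*t0)
                      - t0*(2+t0)*(1+t)*(6+2*t+4*t0)) * t0
                    / ((2+t0)*(1+t0)^2*t^2*(1+t)*(6+2*t+4*t0)) := by
                rw [hQ, he]
                have h2' : (0:ℝ) < 2+t0 := by linarith
                field_simp
                ring
              nlinarith [div_nonneg (mul_nonneg (mul_nonneg (sq_nonneg (t0-t)) hpoly) ht0.le)
                (by positivity : (0:ℝ) ≤ (2+t0)*(1+t0)^2*t^2*(1+t)*(6+2*t+4*t0)), hid]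
            have s1 : 4*(2*t0/(2+t0))*Q ≤ 4*L0*Q := by
              nlinarith [mul_le_mul_of_nonneg_right hlb0 hQnn]
            linarith
          · -- subcase (ii)
            have hepos : 0 < -e := by
              rw [he]
              have hnum : t0*(t-t0) < 0 := by nlinarith
              have hden' : (0:ℝ) < (1+t0)*t := by positivity
              exact neg_pos.2 (div_neg_of_neg_of_pos hnum hden')
            have hpoly : 0 ≤ 2*(t0-t)*(6+4*t0+5*t+3*t*t0) - t0*(1+t)*(6+2*t+4*t0) := by
              nlinarith [mul_nonneg (sub_nonneg.2 h2.le) ht.le,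
                mul_nonneg (sub_nonneg.2 h2.le) ht0.le,
                mul_nonneg (mul_nonneg (sub_nonneg.2 h2.le) ht.le) ht0.le,
                mul_pos ht ht0]
            have h2Q : -e ≤ 2*Q := by
              have hid : 2*Q - (-e)
                  = (t0-t)*(2*(t0-t)*(6+4*t0+5*t+3*t*t0) - t0*(1+t)*(6+2*t+4*t0))
                    / ((1+t0)*t*(1+t)*(6+2*t+4*t0)) := by
                rw [hQ, he]
                field_simp
                ring
              nlinarith [div_nonneg (mul_nonneg (by linarith : (0:ℝ) ≤ t0-t) hpoly)
                (by positivity : (0:ℝ) ≤ (1+t0)*t*(1+t)*(6+2*t+4*t0)), hid]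
            have m1 : (-e)*(-e) ≤ (-e)*(2*Q) := mul_le_mul_of_nonneg_left h2Q hepos.le
            have m2 : (-e)*Q ≤ (2*L0)*Q := mul_le_mul_of_nonneg_right (by linarith) hQnn
            nlinarith [m1, m2, s2]
      nlinarith [sq_nonneg (2*L0*((z-z0)/z0) - e), hD, hL0pos]
  have hiden : (1/z)*L - (2*L0/z0 + t0/(z0*(1+t0)) - t0^2/(z0*(1+t0))*(1/t) - L0/z0^2*z)
      = (L0*((z-z0)/z0)^2 - e*((z-z0)/z0) + (L - L0 - e))/z := by
    rw [he]
    field_simp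
    ring
  have hfrac : 0 ≤ (L0*((z-z0)/z0)^2 - e*((z-z0)/z0) + (L - L0 - e))/z :=
    div_nonneg hq hz.le
  linarith [hiden, hfrac]

/-- Inequality (10) of the paper: surrogate lower bound of `(1/z)·ln(1 + x²/y)`
around the reference point `(x⁰, y⁰, z⁰)`, with equality at the reference point. -/
theorem stmt_2 (x y z x0 y0 z0 A B C : ℝ)
    (hx : 0 < x) (hy : 0 < y) (hz : 0 < z)
    (hx0 : 0 < x0) (hy0 : 0 < y0) (hz0 : 0 < z0)
    (hA : A = 2 * Real.log (1 + x0 ^ 2 / y0) / z0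
            + (x0 ^ 2 / y0) / (z0 * (1 + x0 ^ 2 / y0)))
    (hB : B = (x0 ^ 2 / y0) ^ 2 / (z0 * (1 + x0 ^ 2 / y0)))
    (hC : C = Real.log (1 + x0 ^ 2 / y0) / z0 ^ 2) :
    (1 / z) * Real.log (1 + x ^ 2 / y) ≥ A - B * (y / x ^ 2) - C * z ∧
    (1 / z0) * Real.log (1 + x0 ^ 2 / y0) = A - B * (y0 / x0 ^ 2) - C * z0 := by
  have ht : 0 < x^2/y := by positivity
  have ht0 : 0 < x0^2/y0 := by positivity
  constructor
  · have hcore := core_ineq (x^2/y) (x0^2/y0) z z0 ht ht0 hz hz0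
    have hyx : y / x^2 = 1/(x^2/y) := by
      rw [one_div_div]
    rw [ge_iff_le, hA, hB, hC, hyx]
    linarith
  · have h1t0 : (0:ℝ) < 1 + x0^2/y0 := by linarith
    rw [hA, hB, hC]
    have hx0' : x0 ≠ 0 := ne_of_gt hx0
    have hy0' : y0 ≠ 0 := ne_of_gt hy0
    have hz0' : z0 ≠ 0 := ne_of_gt hz0
    field_simp
    ring
end
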